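/- Let k be a perfect field of characteristic p > 0 and let V be a k-vector space equipped with a Frobenius-semilinear endomorphism F. Assume V is finitely generated over the twisted polynomial ring k_σ[F] (there is a finite subset S ⊆ V whose F-iterates {F^n(s) : n ∈ ℕ, s ∈ S} span V over k) and torsion-free (for every nonzero v ∈ V the family (F^n(v))_{n∈ℕ} is k-linearly independent). Then V is free over k_σ[F]: there exists a finite subset B ⊆ V such that the family (F^n(b))_{n∈ℕ, b∈B} is a k-basis of V. -/

import Mathlib

open Finsupp

section Aux

variable {p : ℕ} [Fact p.Prime] {k : Type*} [Field k] [CharP k p] [PerfectRing k p]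
  {V : Type*} [AddCommGroup V] [Module k V]

/-! ### Basic facts about the semilinear map `F` -/

lemma myF_zero (F : V → V) (hFadd : ∀ x y : V, F (x + y) = F x + F y) : F 0 = 0 := by
  have h := hFadd 0 0
  rw [add_zero] at h
  exact (left_eq_add.mp h)

lemma myF_iter_zero (F : V → V) (hFadd : ∀ x y : V, F (x + y) = F x + F y) (n : ℕ) :
    F^[n] (0 : V) = 0 := by
  induction n with
  | zero => rfl
  | succ n ih => rw [Function.iterate_succ_apply', ih, myF_zero F hFadd]

lemma myF_iter_add (F : V → V) (hFadd : ∀ x y : V, F (x + y) = F x + F y) (n : ℕ) (x y : V) :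
    F^[n] (x + y) = F^[n] x + F^[n] y := by
  induction n with
  | zero => rfl
  | succ n ih => rw [Function.iterate_succ_apply', ih, hFadd,
      Function.iterate_succ_apply', Function.iterate_succ_apply']

lemma myF_iter_smul (F : V → V) (hFsmul : ∀ (c : k) (v : V), F (c • v) = c ^ p • F v)
    (n : ℕ) (c : k) (v : V) : F^[n] (c • v) = c ^ p ^ n • F^[n] v := by
  induction n with
  | zero => simp
  | succ n ih =>
    rw [Function.iterate_succ_apply', ih, hFsmul, Function.iterate_succ_apply', ← pow_mul,
      ← pow_succ]

/-! ### The evaluation of a twisted polynomial on a vector -/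

/-- `phi F P v = ∑ P n • F^[n] v`. -/
noncomputable def phi (F : V → V) (P : ℕ →₀ k) (v : V) : V :=
  P.sum fun n a => a • F^[n] v

lemma phi_zero (F : V → V) (v : V) : phi F (0 : ℕ →₀ k) v = 0 :=
  Finsupp.sum_zero_index

lemma phi_eq_lc (F : V → V) (P : ℕ →₀ k) (v : V) :
    phi F P v = Finsupp.linearCombination k (fun n => F^[n] v) P :=
  (Finsupp.linearCombination_apply _ _).symm

lemma phi_sub_left (F : V → V) (P Q : ℕ →₀ k) (v : V) :
    phi F (P - Q) v = phi F P v - phi F Q v :=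
  Finsupp.sum_sub_index fun _ _ _ => sub_smul _ _ _

lemma phi_add_right (F : V → V) (hFadd : ∀ x y : V, F (x + y) = F x + F y)
    (P : ℕ →₀ k) (v w : V) : phi F P (v + w) = phi F P v + phi F P w := by
  unfold phi
  rw [← Finsupp.sum_add]
  exact Finsupp.sum_congr fun n _ => by rw [myF_iter_add F hFadd, smul_add]

/-- Torsion-freeness: a nonzero twisted polynomial kills only `0`. -/
lemma phi_torsion (F : V → V)
    (htf : ∀ v : V, v ≠ 0 → LinearIndependent k fun n : ℕ => F^[n] v)
    (P : ℕ →₀ k) (v : V) (hP : P ≠ 0) (h : phi F P v = 0) : v = 0 := by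
  by_contra hv
  exact hP (linearIndependent_iff.mp (htf v hv) P (by rw [← phi_eq_lc]; exact h))

/-! ### Span of iterates -/

variable (k) in
/-- The span of all `F`-iterates of a finite family. -/
noncomputable def spanIter (F : V → V) {m : ℕ} (s : Fin m → V) : Submodule k V :=
  Submodule.span k (Set.range fun q : ℕ × Fin m => F^[q.1] (s q.2))

lemma mem_spanIter (F : V → V) {m : ℕ} (s : Fin m → V) (n : ℕ) (i : Fin m) :
    F^[n] (s i) ∈ spanIter k F s :=
  Submodule.subset_span ⟨(n, i), rfl⟩

lemma self_mem_spanIter (F : V → V) {m : ℕ} (s : Fin m → V) (i : Fin m) :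
    s i ∈ spanIter k F s := mem_spanIter F s 0 i

lemma spanIter_stable (F : V → V) (hFadd : ∀ x y : V, F (x + y) = F x + F y)
    (hFsmul : ∀ (c : k) (v : V), F (c • v) = c ^ p • F v)
    {m : ℕ} (s : Fin m → V) {v : V} (hv : v ∈ spanIter k F s) : F v ∈ spanIter k F s := by
  induction hv using Submodule.span_induction with
  | mem x hx =>
    obtain ⟨⟨n, i⟩, rfl⟩ := hx
    have : F (F^[n] (s i)) = F^[n + 1] (s i) := (Function.iterate_succ_apply' F n (s i)).symm
    rw [this]
    exact mem_spanIter F s (n + 1) i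
  | zero => rw [myF_zero F hFadd]; exact zero_mem _
  | add x y _ _ hx hy => rw [hFadd]; exact add_mem hx hy
  | smul c x _ hx => rw [hFsmul]; exact Submodule.smul_mem _ _ hx

lemma spanIter_le (F : V → V) (hFadd : ∀ x y : V, F (x + y) = F x + F y)
    (hFsmul : ∀ (c : k) (v : V), F (c • v) = c ^ p • F v)
    {m m' : ℕ} (s : Fin m → V) (t : Fin m' → V)
    (h : ∀ i, s i ∈ spanIter k F t) : spanIter k F s ≤ spanIter k F t := by
  have key : ∀ (n : ℕ) (i : Fin m), F^[n] (s i) ∈ spanIter k F t := by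
    intro n i
    induction n with
    | zero => exact h i
    | succ n ih =>
      have h2 : F^[n + 1] (s i) = F (F^[n] (s i)) := Function.iterate_succ_apply' F n (s i)
      rw [h2]
      exact spanIter_stable F hFadd hFsmul t ih
  rw [spanIter, Submodule.span_le]
  rintro - ⟨⟨n, i⟩, rfl⟩
  exact key n i

/-! ### Degrees -/

/-- Degree of a twisted polynomial (`0` for the zero polynomial). -/
def tdeg (Q : ℕ →₀ k) : ℕ := Q.support.sup id

lemma le_tdeg {Q : ℕ →₀ k} {n : ℕ} (h : n ∈ Q.support) : n ≤ tdeg Q :=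
  Finset.le_sup (f := id) h

lemma coeff_eq_zero_of_tdeg_lt {Q : ℕ →₀ k} {n : ℕ} (h : tdeg Q < n) : Q n = 0 := by
  by_contra hn
  exact absurd (le_tdeg (Finsupp.mem_support_iff.mpr hn)) (by omega)

lemma tdeg_mem_support {Q : ℕ →₀ k} (hQ : Q ≠ 0) : tdeg Q ∈ Q.support := by
  have hne : Q.support.Nonempty := Finsupp.support_nonempty_iff.mpr hQ
  have : Q.support.max' hne = tdeg Q := by
    rw [Finset.max'_eq_sup', Finset.sup'_eq_sup]; rfl
  rw [← this]
  exact Finset.max'_mem _ _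

lemma lead_ne_zero {Q : ℕ →₀ k} (hQ : Q ≠ 0) : Q (tdeg Q) ≠ 0 :=
  Finsupp.mem_support_iff.mp (tdeg_mem_support hQ)

open scoped Classical in
/-- Weight used for the termination measure. -/
noncomputable def wdeg (Q : ℕ →₀ k) : ℕ := if Q = 0 then 0 else tdeg Q + 1

lemma wdeg_zero : wdeg (0 : ℕ →₀ k) = 0 := by simp [wdeg]

lemma wdeg_of_ne {Q : ℕ →₀ k} (h : Q ≠ 0) : wdeg Q = tdeg Q + 1 := by simp [wdeg, h]

lemma wdeg_pos {Q : ℕ →₀ k} (h : Q ≠ 0) : 0 < wdeg Q := by rw [wdeg_of_ne h]; omega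

/-! ### Right multiplication by a monomial `c F^d` -/

/-- `rightMono p P d c` is the twisted polynomial `P(F) ∘ (c F^d)`, with coefficients
`(rightMono p P d c) (n + d) = P n * c ^ p ^ n`. -/
noncomputable def rightMono (p : ℕ) {k : Type*} [Field k] (P : ℕ →₀ k) (d : ℕ) (c : k) :
    ℕ →₀ k :=
  Finsupp.onFinset (P.support.map (addRightEmbedding d))
    (fun m => if d ≤ m then P (m - d) * c ^ p ^ (m - d) else 0)
    (fun m hm => by
      by_cases h : d ≤ m
      · rw [if_pos h] at hm
        have hP : P (m - d) ≠ 0 := fun h0 => hm (by rw [h0, zero_mul])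
        exact Finset.mem_map.mpr ⟨m - d, Finsupp.mem_support_iff.mpr hP, by
          simp [addRightEmbedding, h, Nat.sub_add_cancel h]⟩
      · rw [if_neg h] at hm; exact absurd rfl hm)

lemma rightMono_apply_of_le (p : ℕ) {k : Type*} [Field k] (P : ℕ →₀ k) (d : ℕ) (c : k)
    {m : ℕ} (h : d ≤ m) : rightMono p P d c m = P (m - d) * c ^ p ^ (m - d) := by
  simp [rightMono, Finsupp.onFinset_apply, h]

lemma rightMono_apply_add (p : ℕ) {k : Type*} [Field k] (P : ℕ →₀ k) (d : ℕ) (c : k)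
    (n : ℕ) : rightMono p P d c (n + d) = P n * c ^ p ^ n := by
  rw [rightMono_apply_of_le p P d c (Nat.le_add_left d n), Nat.add_sub_cancel]

lemma phi_rightMono (F : V → V)
    (hFsmul : ∀ (c : k) (v : V), F (c • v) = c ^ p • F v)
    (P : ℕ →₀ k) (d : ℕ) (c : k) (w : V) :
    phi F (rightMono p P d c) w = phi F P (c • F^[d] w) := by
  unfold phi rightMono
  rw [Finsupp.onFinset_sum (g := fun n (a : k) => a • F^[n] w) _ (fun a => zero_smul _ _),
    Finset.sum_map, Finsupp.sum]
  refine Finset.sum_congr rfl fun n hn => ?_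
  have he : (addRightEmbedding d) n = n + d := rfl
  rw [he, if_pos (Nat.le_add_left d n), Nat.add_sub_cancel,
    myF_iter_smul F hFsmul n c (F^[d] w), ← Function.iterate_add_apply, mul_smul]

/-- In a perfect field every element has `p^e`-th roots. -/
lemma exists_pow_pow_root (e : ℕ) (y : k) : ∃ c : k, c ^ p ^ e = y := by
  induction e generalizing y with
  | zero => exact ⟨y, by simp⟩
  | succ e ih =>
    obtain ⟨z, hz⟩ := surjective_frobenius k p y
    obtain ⟨c, hc⟩ := ih z
    exact ⟨c, by rw [pow_succ, pow_mul, hc, ← hz]; rfl⟩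

/-! ### The Euclidean reduction step -/

lemma euclid_step (F : V → V) (hFadd : ∀ x y : V, F (x + y) = F x + F y)
    (hFsmul : ∀ (c : k) (v : V), F (c • v) = c ^ p • F v)
    {m : ℕ} (s : Fin m → V) (P : Fin m → (ℕ →₀ k))
    (i j : Fin m) (hij : i ≠ j) (hPi : P i ≠ 0) (hPj : P j ≠ 0)
    (hdeg : tdeg (P i) ≤ tdeg (P j))
    (hrel : ∑ l, phi F (P l) (s l) = 0) (hspan : spanIter k F s = ⊤) :
    ∃ (s' : Fin m → V) (P' : Fin m → (ℕ →₀ k)),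
      (∑ l, phi F (P' l) (s' l)) = 0 ∧ spanIter k F s' = ⊤ ∧ P' i = P i ∧
      (∑ l, wdeg (P' l)) < (∑ l, wdeg (P l)) := by
  classical
  set e := tdeg (P i) with he
  set D := tdeg (P j) with hD
  set d := D - e with hd
  have hed : e + d = D := by omega
  have ha : P i e ≠ 0 := lead_ne_zero hPi
  have hb : P j D ≠ 0 := lead_ne_zero hPj
  obtain ⟨c, hc⟩ := exists_pow_pow_root (p := p) e ((P i e)⁻¹ * P j D)
  set rM := rightMono p (P i) d c with hrM
  -- leading coefficients cancel
  have hlead : rM D = P j D := by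
    rw [hrM, ← hed, rightMono_apply_add, hc, ← mul_assoc, mul_inv_cancel₀ ha, one_mul, hed]
  set R := P j - rM with hR
  have hRcoeff : ∀ n, D ≤ n → R n = 0 := by
    intro n hn
    rcases eq_or_lt_of_le hn with h | h
    · rw [hR, Finsupp.sub_apply, ← h, hlead, sub_self]
    · have h1 : P j n = 0 := coeff_eq_zero_of_tdeg_lt (by omega)
      have h2 : rM n = 0 := by
        rw [hrM, rightMono_apply_of_le p (P i) d c (by omega)]
        have : P i (n - d) = 0 := coeff_eq_zero_of_tdeg_lt (by omega)
        rw [this, zero_mul]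
      rw [hR, Finsupp.sub_apply, h1, h2, sub_self]
  have hwR : wdeg R < wdeg (P j) := by
    rw [wdeg_of_ne hPj, ← hD]
    by_cases hR0 : R = 0
    · rw [hR0, wdeg_zero]; omega
    · rw [wdeg_of_ne hR0]
      have : ¬ D ≤ tdeg R := fun h => lead_ne_zero hR0 (hRcoeff _ h)
      omega
  set P' := Function.update P j R with hP'
  set s' := Function.update s i (s i + c • F^[d] (s j)) with hs'
  have hP'i : P' i = P i := Function.update_of_ne hij R P
  have hP'j : P' j = R := Function.update_self j R P
  have hs'i : s' i = s i + c • F^[d] (s j) := Function.update_self i _ s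
  have hs'j : s' j = s j := Function.update_of_ne (Ne.symm hij) _ s
  refine ⟨s', P', ?_, ?_, hP'i, ?_⟩
  · -- the relation is preserved
    have key : ∀ l, phi F (P' l) (s' l) + (if l = j then phi F rM (s j) else 0)
        = phi F (P l) (s l) + (if l = i then phi F (P i) (c • F^[d] (s j)) else 0) := by
      intro l
      by_cases hli : l = i
      · subst hli
        rw [hP'i, hs'i, if_neg hij, if_pos rfl, add_zero, phi_add_right F hFadd]
      · by_cases hlj : l = j
        · subst hlj
          rw [hP'j, hs'j, if_pos rfl, if_neg hli, add_zero, hR, phi_sub_left,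
            sub_add_cancel]
        · rw [if_neg hli, if_neg hlj, add_zero, add_zero, hP', hs',
            Function.update_of_ne hlj R P, Function.update_of_ne hli _ s]
    have hA : ∑ l, (if l = j then phi F rM (s j) else 0) = phi F rM (s j) := by simp
    have hB : ∑ l, (if l = i then phi F (P i) (c • F^[d] (s j)) else 0)
        = phi F (P i) (c • F^[d] (s j)) := by simp
    have hsum : (∑ l, phi F (P' l) (s' l)) + phi F rM (s j)
        = (∑ l, phi F (P l) (s l)) + phi F (P i) (c • F^[d] (s j)) := by
      rw [← hA, ← hB, ← Finset.sum_add_distrib, ← Finset.sum_add_distrib]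
      exact Finset.sum_congr rfl fun l _ => key l
    rw [hrel, zero_add, ← phi_rightMono F hFsmul (P i) d c (s j), ← hrM] at hsum
    have h0 : (∑ l, phi F (P' l) (s' l)) + phi F rM (s j) = 0 + phi F rM (s j) := by
      rw [hsum, zero_add]
    exact add_right_cancel h0
  · -- the span is preserved
    refine top_unique ?_
    rw [← hspan]
    refine spanIter_le F hFadd hFsmul s s' fun l => ?_
    by_cases hli : l = i
    · rw [hli]
      have h1 : s i = s' i - c • F^[d] (s' j) := by rw [hs'i, hs'j]; abel
      rw [h1]
      exact sub_mem (self_mem_spanIter F s' i)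
        (Submodule.smul_mem _ _ (mem_spanIter F s' d j))
    · have h2 : s l = s' l := (Function.update_of_ne hli _ s).symm
      rw [h2]
      exact self_mem_spanIter F s' l
  · -- the measure strictly decreases
    have h1 : (fun l => wdeg (P' l)) = Function.update (fun l => wdeg (P l)) j (wdeg R) := by
      funext l
      by_cases hlj : l = j
      · subst hlj; rw [hP'j, Function.update_self]
      · rw [hP', Function.update_of_ne hlj, Function.update_of_ne hlj]
    calc ∑ l, wdeg (P' l) = wdeg R + ∑ l ∈ Finset.univ \ {j}, wdeg (P l) := by
            rw [h1]
            exact Finset.sum_update_of_mem (Finset.mem_univ j) (fun l' => wdeg (P l'))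
              (wdeg R)
      _ < wdeg (P j) + ∑ l ∈ Finset.univ \ {j}, wdeg (P l) := by omega
      _ = ∑ l, wdeg (P l) := by
            have h2 : ∑ l, wdeg (P l)
                = ∑ l, Function.update (fun l' => wdeg (P l')) j (wdeg (P j)) l :=
              Finset.sum_congr rfl fun l _ => by
                by_cases hlj : l = j
                · subst hlj; rw [Function.update_self]
                · rw [Function.update_of_ne hlj]
            rw [h2]
            exact (Finset.sum_update_of_mem (Finset.mem_univ j) (fun l' => wdeg (P l'))
              (wdeg (P j))).symm

/-! ### The Euclidean algorithm -/

lemma euclid (F : V → V) (hFadd : ∀ x y : V, F (x + y) = F x + F y)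
    (hFsmul : ∀ (c : k) (v : V), F (c • v) = c ^ p • F v)
    (htf : ∀ v : V, v ≠ 0 → LinearIndependent k fun n : ℕ => F^[n] v) :
    ∀ (N m : ℕ) (s : Fin m → V) (P : Fin m → (ℕ →₀ k)),
      (∑ l, wdeg (P l)) ≤ N →
      (∃ i, P i ≠ 0) →
      (∑ l, phi F (P l) (s l)) = 0 →
      spanIter k F s = ⊤ →
      ∃ t : Fin m → V, (∃ j, t j = 0) ∧ spanIter k F t = ⊤ := by
  intro N
  induction N with
  | zero =>
    intro m s P hN hex _ _
    obtain ⟨i, hi⟩ := hex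
    have h1 : wdeg (P i) ≤ ∑ l, wdeg (P l) :=
      Finset.single_le_sum (f := fun l => wdeg (P l)) (fun l _ => Nat.zero_le _)
        (Finset.mem_univ i)
    have := wdeg_pos hi
    omega
  | succ N ih =>
    intro m s P hN hex hrel hspan
    by_cases htwo : ∃ i j : Fin m, i ≠ j ∧ P i ≠ 0 ∧ P j ≠ 0
    · obtain ⟨i, j, hij, hPi, hPj⟩ := htwo
      rcases le_total (tdeg (P i)) (tdeg (P j)) with hle | hle
      · obtain ⟨s', P', hrel', hspan', hP'i, hlt⟩ :=
          euclid_step F hFadd hFsmul s P i j hij hPi hPj hle hrel hspan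
        exact ih m s' P' (by omega) ⟨i, by rw [hP'i]; exact hPi⟩ hrel' hspan'
      · obtain ⟨s', P', hrel', hspan', hP'j, hlt⟩ :=
          euclid_step F hFadd hFsmul s P j i (Ne.symm hij) hPj hPi hle hrel hspan
        exact ih m s' P' (by omega) ⟨j, by rw [hP'j]; exact hPj⟩ hrel' hspan'
    · obtain ⟨i, hi⟩ := hex
      have hone : ∀ l, l ≠ i → P l = 0 := by
        intro l hl
        by_contra h0
        exact htwo ⟨l, i, hl, h0, hi⟩
      have hsum : ∑ l, phi F (P l) (s l) = phi F (P i) (s i) :=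
        Finset.sum_eq_single i
          (fun l _ hl => by rw [hone l hl, phi_zero])
          (fun h => absurd (Finset.mem_univ i) h)
      have hzero : s i = 0 :=
        phi_torsion F htf (P i) (s i) hi (by rw [← hsum]; exact hrel)
      exact ⟨s, ⟨i, hzero⟩, hspan⟩

end Aux

/-- Let `k` be a perfect field of characteristic `p > 0` and `V` a
`k`-vector space with a Frobenius-semilinear endomorphism `F`, finitely generated over the
twisted polynomial ring `k_σ[F]` and torsion-free.  Then `V` is free over `k_σ[F]`:
there is a finite set `B ⊆ V` such that the family `(F^[n] b)_{n, b}` is a `k`-basis. -/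
theorem stmt_4 (p : ℕ) [Fact p.Prime] (k : Type*) [Field k] [CharP k p] [PerfectRing k p]
    (V : Type*) [AddCommGroup V] [Module k V]
    (F : V → V)
    (hFadd : ∀ x y : V, F (x + y) = F x + F y)
    (hFsmul : ∀ (c : k) (v : V), F (c • v) = c ^ p • F v)
    (hfg : ∃ S : Finset V,
      Submodule.span k (Set.range fun ns : ℕ × S => F^[ns.1] (ns.2 : V)) = ⊤)
    (htf : ∀ v : V, v ≠ 0 → LinearIndependent k fun n : ℕ => F^[n] v) :
    ∃ B : Finset V,
      LinearIndependent k (fun nb : ℕ × B => F^[nb.1] (nb.2 : V)) ∧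
      Submodule.span k (Set.range fun nb : ℕ × B => F^[nb.1] (nb.2 : V)) = ⊤ := by
  classical
  -- there exists a generating family indexed by some `Fin m`
  have hex : ∃ m : ℕ, ∃ s : Fin m → V, spanIter k F s = ⊤ := by
    obtain ⟨S, hS⟩ := hfg
    refine ⟨S.card, fun i => ((S.equivFin.symm i : S) : V), ?_⟩
    have hsurj : Function.Surjective
        (fun q : ℕ × Fin S.card => ((q.1, S.equivFin.symm q.2) : ℕ × S)) := by
      rintro ⟨n, x⟩
      exact ⟨(n, S.equivFin x), by simp⟩
    have hcomp : (fun q : ℕ × Fin S.card => F^[q.1] (((S.equivFin.symm q.2 : S)) : V))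
        = (fun ns : ℕ × S => F^[ns.1] (ns.2 : V)) ∘
          (fun q : ℕ × Fin S.card => ((q.1, S.equivFin.symm q.2) : ℕ × S)) := rfl
    rw [spanIter, hcomp, Function.Surjective.range_comp hsurj, hS]
  -- take a minimal generating family
  obtain ⟨m, s, hs, hmin⟩ : ∃ (m : ℕ) (s : Fin m → V), spanIter k F s = ⊤ ∧
      ∀ m' < m, ∀ t : Fin m' → V, spanIter k F t ≠ ⊤ := by
    refine ⟨Nat.find hex, (Nat.find_spec hex).choose, (Nat.find_spec hex).choose_spec, ?_⟩
    intro m' hm' t ht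
    exact Nat.find_min hex hm' ⟨t, ht⟩
  -- the minimal family is independent
  have hind : LinearIndependent k (fun q : ℕ × Fin m => F^[q.1] (s q.2)) := by
    rw [linearIndependent_iff]
    intro l hl
    by_contra hl0
    set P : Fin m → (ℕ →₀ k) :=
      fun i => (Finsupp.equivMapDomain (Equiv.prodComm ℕ (Fin m)) l).curry i with hP
    have hPapp : ∀ (i : Fin m) (n : ℕ), P i n = l (n, i) := by
      intro i n
      rw [hP]
      rw [Finsupp.curry_apply, Finsupp.equivMapDomain_apply]
      rfl
    have hPne : ∃ i, P i ≠ 0 := by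
      obtain ⟨q, hq⟩ := Finsupp.ne_iff.mp hl0
      refine ⟨q.2, fun h0 => ?_⟩
      apply hq
      have : P q.2 q.1 = l (q.1, q.2) := hPapp q.2 q.1
      rw [h0] at this
      simpa using this.symm
    have hsum : ∑ i, phi F (P i) (s i) = 0 := by
      have h1 := Finsupp.sum_fintype
          ((Finsupp.equivMapDomain (Equiv.prodComm ℕ (Fin m)) l).curry)
          (fun i Q => Q.sum fun n a => a • F^[n] (s i))
          (fun i => Finsupp.sum_zero_index)
      have h2 := Finsupp.sum_curry_index
          (Finsupp.equivMapDomain (Equiv.prodComm ℕ (Fin m)) l)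
          (fun i n a => a • F^[n] (s i))
      have h3 := Finsupp.sum_equivMapDomain (Equiv.prodComm ℕ (Fin m)) l
          (fun q (a : k) => a • F^[q.2] (s q.1))
      rw [Finsupp.linearCombination_apply] at hl
      exact h1.symm.trans (h2.trans (h3.trans hl))
    obtain ⟨t, ⟨j, htj⟩, htspan⟩ :=
      euclid F hFadd hFsmul htf (∑ l, wdeg (P l)) m s P le_rfl hPne hsum hs
    -- drop the zero generator : contradiction with minimality
    cases m with
    | zero => exact j.elim0
    | succ m' =>
      refine hmin m' (Nat.lt_succ_self m') (fun i' => t (j.succAbove i')) ?_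
      refine top_unique ?_
      rw [← htspan]
      refine spanIter_le F hFadd hFsmul t _ fun l => ?_
      by_cases hlj : l = j
      · rw [hlj, htj]; exact zero_mem _
      · obtain ⟨z, hz⟩ := Fin.exists_succAbove_eq hlj
        rw [← hz]
        exact self_mem_spanIter F (fun i' => t (j.succAbove i')) z
  -- build the finset
  have hsinj : Function.Injective s := by
    intro i j hij
    have h2 : ((0, i) : ℕ × Fin m) = (0, j) := by
      apply hind.injective
      simpa using hij
    exact (Prod.ext_iff.mp h2).2
  set B : Finset V := Finset.image s Finset.univ with hB
  have hmem : ∀ i : Fin m, s i ∈ B := fun i =>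
    Finset.mem_image_of_mem s (Finset.mem_univ i)
  set e : ℕ × Fin m → ℕ × B := fun q => (q.1, ⟨s q.2, hmem q.2⟩) with hech
  have hbij : Function.Bijective e := by
    constructor
    · rintro ⟨n, i⟩ ⟨n', i'⟩ h
      have h1 : n = n' := (Prod.ext_iff.mp h).1
      have h2 : s i = s i' := Subtype.ext_iff.mp (Prod.ext_iff.mp h).2
      rw [h1, hsinj h2]
    · rintro ⟨n, v, hv⟩
      obtain ⟨i, -, hi⟩ := Finset.mem_image.mp hv
      exact ⟨(n, i), by simp [hech, hi]⟩
  set E : (ℕ × Fin m) ≃ (ℕ × B) := Equiv.ofBijective e hbij with hE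
  have hcomp : (fun nb : ℕ × B => F^[nb.1] (nb.2 : V))
      = (fun q : ℕ × Fin m => F^[q.1] (s q.2)) ∘ E.symm := by
    funext nb
    have h1 : e (E.symm nb) = nb := E.apply_symm_apply nb
    have h2 : (E.symm nb).1 = nb.1 := (Prod.ext_iff.mp h1).1
    have h3 : s ((E.symm nb).2) = (nb.2 : V) := by
      have := (Prod.ext_iff.mp h1).2
      exact congrArg Subtype.val this
    show F^[nb.1] (nb.2 : V) = F^[(E.symm nb).1] (s ((E.symm nb).2))
    rw [h2, h3]
  refine ⟨B, ?_, ?_⟩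
  · rw [hcomp]
    exact hind.comp E.symm E.symm.injective
  · rw [hcomp, Function.Surjective.range_comp E.symm.surjective]
    exact hs
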